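/- Let (X,d) be a proper metric space such that every 1-Lipschitz-on-chains function is globally 1-Lipschitz in the following sense: for every ε > 0 and x ∈ X, the function f_ε(y) := inf { Σ_i d(x_i, x_{i+1}) : x_0 = x, x_n = y, d(x_i,x_{i+1}) ≤ ε } is 1-Lipschitz on X. Then, if moreover f_ε(y) → d(x,y) as ε → 0 for all x,y (equivalently the theses of the proposition on Lipschitz representatives hold), (X,d) is a geodesic space. -/
import Mathlib

/-- The set of lengths of `ε`-chains joining `x` to `y`. -/
def chainLengths {X : Type*} [MetricSpace X] (ε : ℝ) (x y : X) : Set ℝ :=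
  { L | ∃ (n : ℕ) (c : ℕ → X), c 0 = x ∧ c n = y ∧
      (∀ i < n, dist (c i) (c (i + 1)) ≤ ε) ∧
      L = ∑ i ∈ Finset.range n, dist (c i) (c (i + 1)) }

/-- The infimal length of `ε`-chains from `x` to `y`. -/
noncomputable def chainDist {X : Type*} [MetricSpace X] (ε : ℝ) (x : X) : X → ℝ :=
  fun y => sInf (chainLengths ε x y)

namespace Stmt12Aux

open Filter Set

variable {X : Type*} [MetricSpace X]

/-- Partial sums of a chain. -/
noncomputable def pSum (c : ℕ → X) (i : ℕ) : ℝ :=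
  ∑ k ∈ Finset.range i, dist (c k) (c (k + 1))

lemma pSum_nonneg (c : ℕ → X) (i : ℕ) : 0 ≤ pSum c i :=
  Finset.sum_nonneg fun _ _ => dist_nonneg

lemma pSum_zero (c : ℕ → X) : pSum c 0 = 0 := by simp [pSum]

lemma pSum_succ (c : ℕ → X) (i : ℕ) :
    pSum c (i + 1) = pSum c i + dist (c i) (c (i + 1)) :=
  Finset.sum_range_succ _ _

lemma pSum_mono (c : ℕ → X) : Monotone (pSum c) := fun i j h =>
  Finset.sum_le_sum_of_subset_of_nonneg (Finset.range_subset_range.2 h)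
    (fun _ _ _ => dist_nonneg)

lemma dist_le_pSum (c : ℕ → X) {i j : ℕ} (h : i ≤ j) :
    dist (c i) (c j) ≤ pSum c j - pSum c i := by
  have h1 : pSum c j - pSum c i = ∑ k ∈ Finset.Ico i j, dist (c k) (c (k + 1)) :=
    (Finset.sum_Ico_eq_sub _ h).symm
  rw [h1, Finset.sum_Ico_eq_sum_range]
  have h2 := dist_le_range_sum_dist (fun k => c (i + k)) (j - i)
  have h3 : i + (j - i) = j := Nat.add_sub_cancel' h
  simp only [← add_assoc, h3, add_zero] at h2
  exact h2

open Classical in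
/-- Index of the last chain point whose partial sum is `≤ t`. -/
noncomputable def idx (c : ℕ → X) (m : ℕ) (t : ℝ) : ℕ :=
  Nat.findGreatest (fun i => pSum c i ≤ t) m

lemma idx_le (c : ℕ → X) (m : ℕ) (t : ℝ) : idx c m t ≤ m :=
  Nat.findGreatest_le m

lemma pSum_idx_le (c : ℕ → X) (m : ℕ) {t : ℝ} (ht : 0 ≤ t) :
    pSum c (idx c m t) ≤ t := by
  classical
  exact Nat.findGreatest_spec (P := fun i => pSum c i ≤ t) (Nat.zero_le m)
    (show pSum c 0 ≤ t by rw [pSum_zero]; exact ht)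

lemma le_pSum_idx (c : ℕ → X) (m : ℕ) {ε t : ℝ} (hε : 0 ≤ ε)
    (hsteps : ∀ i < m, dist (c i) (c (i + 1)) ≤ ε) (ht : t ≤ pSum c m) :
    t ≤ pSum c (idx c m t) + ε := by
  classical
  rcases eq_or_lt_of_le (idx_le c m t) with h | h
  · calc t ≤ pSum c m := ht
    _ = pSum c (idx c m t) := by rw [h]
    _ ≤ pSum c (idx c m t) + ε := by linarith
  · have hnot : ¬ (pSum c (idx c m t + 1) ≤ t) :=
      Nat.findGreatest_is_greatest (Nat.lt_succ_self _) h
    have hlt : t < pSum c (idx c m t) + dist (c (idx c m t)) (c (idx c m t + 1)) := by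
      rw [← pSum_succ]; exact lt_of_not_ge hnot
    have := hsteps (idx c m t) h
    linarith

lemma idx_mono (c : ℕ → X) (m : ℕ) {s t : ℝ} (hs : 0 ≤ s) (hst : s ≤ t) :
    idx c m s ≤ idx c m t := by
  classical
  exact Nat.le_findGreatest (idx_le c m s) ((pSum_idx_le c m hs).trans hst)

/-- Main estimate: points on a near-minimizing chain chosen at prescribed arclength
are at nearly the prescribed distance. -/
lemma key_est (c : ℕ → X) (m : ℕ) {ε δ : ℝ} (hε : 0 ≤ ε) (hδ : 0 ≤ δ)
    (hsteps : ∀ i < m, dist (c i) (c (i + 1)) ≤ ε)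
    (hlen : pSum c m ≤ dist (c 0) (c m) + δ)
    {s t : ℝ} (hs0 : 0 ≤ s) (hst : s ≤ t) (htd : t ≤ dist (c 0) (c m)) :
    |dist (c (idx c m s)) (c (idx c m t)) - (t - s)| ≤ ε + δ := by
  set d := dist (c 0) (c m) with hddef
  have ht0 : 0 ≤ t := hs0.trans hst
  have hdS : d ≤ pSum c m := by
    have := dist_le_pSum c (Nat.zero_le m)
    rw [pSum_zero] at this; linarith
  set I := idx c m s with hI
  set J := idx c m t with hJ
  have hIJ : I ≤ J := idx_mono c m hs0 hst
  have hSJ : pSum c J ≤ t := pSum_idx_le c m ht0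
  have hSI : pSum c I ≤ s := pSum_idx_le c m hs0
  have hsI : s ≤ pSum c I + ε := le_pSum_idx c m hε hsteps (hst.trans (htd.trans hdS))
  have htJ : t ≤ pSum c J + ε := le_pSum_idx c m hε hsteps (htd.trans hdS)
  have hup : dist (c I) (c J) ≤ pSum c J - pSum c I := dist_le_pSum c hIJ
  have h0I : dist (c 0) (c I) ≤ pSum c I := by
    have := dist_le_pSum c (Nat.zero_le I); rw [pSum_zero] at this; linarith
  have hJm : dist (c J) (c m) ≤ pSum c m - pSum c J := dist_le_pSum c (idx_le c m t)
  have htri : d ≤ dist (c 0) (c I) + dist (c I) (c J) + dist (c J) (c m) := by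
    calc d ≤ dist (c 0) (c J) + dist (c J) (c m) := dist_triangle _ _ _
    _ ≤ dist (c 0) (c I) + dist (c I) (c J) + dist (c J) (c m) := by
        have := dist_triangle (c 0) (c I) (c J); linarith
  rw [abs_le]
  constructor <;> linarith

lemma apply_zero (c : ℕ → X) (m : ℕ) : c (idx c m 0) = c 0 := by
  have h1 : dist (c 0) (c (idx c m 0)) ≤ pSum c (idx c m 0) - pSum c 0 :=
    dist_le_pSum c (Nat.zero_le _)
  have h2 : pSum c (idx c m 0) ≤ 0 := pSum_idx_le c m le_rfl
  rw [pSum_zero] at h1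
  have : dist (c 0) (c (idx c m 0)) ≤ 0 := by linarith
  exact (eq_of_dist_eq_zero (le_antisymm this dist_nonneg)).symm

lemma apply_end (c : ℕ → X) (m : ℕ) {ε δ : ℝ} (hε : 0 ≤ ε) (hδ : 0 ≤ δ)
    (hsteps : ∀ i < m, dist (c i) (c (i + 1)) ≤ ε)
    (hlen : pSum c m ≤ dist (c 0) (c m) + δ) :
    dist (c (idx c m (dist (c 0) (c m)))) (c m) ≤ ε + δ := by
  set d := dist (c 0) (c m) with hddef
  have hdS : d ≤ pSum c m := by
    have := dist_le_pSum c (Nat.zero_le m); rw [pSum_zero] at this; linarith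
  have h1 : dist (c (idx c m d)) (c m) ≤ pSum c m - pSum c (idx c m d) :=
    dist_le_pSum c (idx_le c m d)
  have h2 : d ≤ pSum c (idx c m d) + ε := le_pSum_idx c m hε hsteps hdS
  linarith

lemma dist_zero_apply (c : ℕ → X) (m : ℕ) (t : ℝ) :
    dist (c 0) (c (idx c m t)) ≤ pSum c m := by
  have h1 : dist (c 0) (c (idx c m t)) ≤ pSum c (idx c m t) - pSum c 0 :=
    dist_le_pSum c (Nat.zero_le _)
  have h2 : pSum c (idx c m t) ≤ pSum c m := pSum_mono c (idx_le c m t)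
  rw [pSum_zero] at h1; linarith

end Stmt12Aux

open Filter Set Stmt12Aux in
/-- If in a proper metric space every infimal `ε`-chain-length function `f_ε = chainDist ε x`
is (globally) 1-Lipschitz and `f_ε(y) → d(x,y)` as `ε ↓ 0`, then the space is geodesic. -/
theorem stmt_12 {X : Type*} [MetricSpace X] [ProperSpace X]
    (hlip : ∀ ε > (0 : ℝ), ∀ x : X, LipschitzWith 1 (chainDist ε x))
    (hconv : ∀ x y : X, Filter.Tendsto (fun ε : ℝ => chainDist ε x y)
      (nhdsWithin 0 (Set.Ioi 0)) (nhds (dist x y))) :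
    ∀ x y : X, ∃ g : ℝ → X, g 0 = x ∧ g (dist x y) = y ∧
      ∀ s ∈ Set.Icc (0 : ℝ) (dist x y), ∀ t ∈ Set.Icc (0 : ℝ) (dist x y),
        dist (g s) (g t) = |s - t| := by
  intro x y
  by_cases hxy : x = y
  · subst hxy
    refine ⟨fun _ => x, rfl, rfl, ?_⟩
    intro s hs t ht
    simp only [dist_self, Set.Icc_self, Set.mem_singleton_iff] at hs ht
    subst hs; subst ht; simp
  -- Main case : x ≠ y
  set d := dist x y with hddef
  have hd : 0 < d := dist_pos.2 hxy
  -- Step 1: near-minimizing chains with small steps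
  have hchain : ∀ n : ℕ, ∃ (m : ℕ) (c : ℕ → X), c 0 = x ∧ c m = y ∧
      (∀ i < m, dist (c i) (c (i + 1)) ≤ 1 / ((n : ℝ) + 1)) ∧
      pSum c m ≤ d + 1 / ((n : ℝ) + 1) := by
    intro n
    have hn : (0 : ℝ) < 1 / ((n : ℝ) + 1) := by positivity
    set δ : ℝ := min (1 / ((n : ℝ) + 1)) (d / 2) with hδdef
    have hδ0 : 0 < δ := lt_min hn (by linarith)
    have hδd : δ ≤ d / 2 := min_le_right _ _
    have hδn : δ ≤ 1 / ((n : ℝ) + 1) := min_le_left _ _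
    have h1 : ∀ᶠ ε in nhdsWithin (0 : ℝ) (Set.Ioi 0),
        chainDist ε x y ∈ Set.Ioo (d - δ) (d + δ) :=
      (hconv x y) (Ioo_mem_nhds (by linarith) (by linarith))
    have h2 : ∀ᶠ ε in nhdsWithin (0 : ℝ) (Set.Ioi 0), ε < 1 / ((n : ℝ) + 1) :=
      mem_nhdsWithin_of_mem_nhds (Iio_mem_nhds hn)
    have h3 : ∀ᶠ ε in nhdsWithin (0 : ℝ) (Set.Ioi 0), (0 : ℝ) < ε :=
      self_mem_nhdsWithin
    obtain ⟨ε, hεIoo, hε2, hε0⟩ := (h1.and (h2.and h3)).exists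
    -- nonemptiness of chainLengths
    have hne : (chainLengths ε x y).Nonempty := by
      by_contra h
      rw [Set.not_nonempty_iff_eq_empty] at h
      have h0 : chainDist ε x y = 0 := by simp [chainDist, h, Real.sInf_empty]
      have := hεIoo.1
      rw [h0] at this
      linarith
    have hbdd : BddBelow (chainLengths ε x y) := by
      refine ⟨0, fun L hL => ?_⟩
      obtain ⟨k, c, _, _, _, rfl⟩ := hL
      exact Finset.sum_nonneg fun _ _ => dist_nonneg
    have hlt : sInf (chainLengths ε x y) < d + δ := hεIoo.2
    obtain ⟨L, hL, hLlt⟩ := (csInf_lt_iff hbdd hne).1 hlt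
    obtain ⟨k, c, hc0, hck, hsteps, rfl⟩ := hL
    refine ⟨k, c, hc0, hck, fun i hi => (hsteps i hi).trans hε2.le, ?_⟩
    show pSum c k ≤ d + 1 / ((n : ℝ) + 1)
    have : pSum c k = ∑ i ∈ Finset.range k, dist (c i) (c (i + 1)) := rfl
    rw [this]
    linarith
  choose m c hc0 hcm hsteps hlen using hchain
  -- approximating points
  set gn : ℕ → ℝ → X := fun n t => (c n) (idx (c n) (m n) t) with hgn
  have hball : ∀ (n : ℕ) (t : ℝ), gn n t ∈ Metric.closedBall x (d + 1) := by
    intro n t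
    have h1 := dist_zero_apply (c n) (m n) t
    rw [hc0 n] at h1
    have h2 : (1 : ℝ) / ((n : ℝ) + 1) ≤ 1 := by
      rw [div_le_one (by positivity)]; simp
    have := hlen n
    rw [Metric.mem_closedBall, dist_comm]
    exact h1.trans (by linarith)
  -- ultrafilter limit
  set U : Ultrafilter ℕ := Ultrafilter.of atTop with hUdef
  have hU : (U : Filter ℕ) ≤ atTop := Ultrafilter.of_le _
  have hglim : ∀ t : ℝ, ∃ z : X,
      Tendsto (fun n => gn n t) (U : Filter ℕ) (nhds z) := by
    intro t
    have hK : IsCompact (Metric.closedBall x (d + 1)) := isCompact_closedBall x _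
    obtain ⟨z, _, hz⟩ := hK.ultrafilter_le_nhds (U.map (fun n => gn n t))
      (le_principal_iff.2 (mem_map.2 (univ_mem' fun n => hball n t)))
    exact ⟨z, hz⟩
  choose g hg using hglim
  -- the error rate
  have hrate : Tendsto (fun n : ℕ => 2 * (1 / ((n : ℝ) + 1))) atTop (nhds 0) := by
    have := tendsto_one_div_add_atTop_nhds_zero_nat.const_mul (2 : ℝ)
    simpa using this
  -- key isometry property
  have hiso : ∀ s ∈ Set.Icc (0 : ℝ) d, ∀ t ∈ Set.Icc (0 : ℝ) d, s ≤ t →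
      dist (g s) (g t) = t - s := by
    intro s hs t ht hst
    have hclose : ∀ n : ℕ,
        |dist (gn n s) (gn n t) - (t - s)| ≤ 2 * (1 / ((n : ℝ) + 1)) := by
      intro n
      have hn : (0 : ℝ) ≤ 1 / ((n : ℝ) + 1) := by positivity
      have hdcn : dist ((c n) 0) ((c n) (m n)) = d := by rw [hc0 n, hcm n]
      have := key_est (c n) (m n) hn hn (hsteps n)
        (by rw [hdcn]; exact hlen n) hs.1 hst (by rw [hdcn]; exact ht.2)
      calc |dist (gn n s) (gn n t) - (t - s)|
          ≤ 1 / ((n : ℝ) + 1) + 1 / ((n : ℝ) + 1) := this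
        _ = 2 * (1 / ((n : ℝ) + 1)) := by ring
    have hA0 : Tendsto (fun n => dist (gn n s) (gn n t) - (t - s)) atTop (nhds 0) :=
      squeeze_zero_norm hclose hrate
    have hA : Tendsto (fun n => dist (gn n s) (gn n t)) atTop (nhds (t - s)) := by
      have := hA0.add_const (t - s)
      simpa using this
    have hB : Tendsto (fun n => dist (gn n s) (gn n t)) (U : Filter ℕ)
        (nhds (dist (g s) (g t))) := (hg s).dist (hg t)
    exact tendsto_nhds_unique hB (hA.mono_left hU)
  -- endpoints
  have hx : g 0 = x := by
    have hconst : ∀ n : ℕ, gn n 0 = x := by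
      intro n
      show (c n) (idx (c n) (m n) 0) = x
      rw [apply_zero (c n) (m n), hc0 n]
    have : Tendsto (fun n => gn n 0) (U : Filter ℕ) (nhds x) := by
      simp only [hconst]; exact tendsto_const_nhds
    exact tendsto_nhds_unique (hg 0) this
  have hy : g d = y := by
    have hclose : ∀ n : ℕ, dist (gn n d) y ≤ 2 * (1 / ((n : ℝ) + 1)) := by
      intro n
      have hn : (0 : ℝ) ≤ 1 / ((n : ℝ) + 1) := by positivity
      have hdcn : dist ((c n) 0) ((c n) (m n)) = d := by rw [hc0 n, hcm n]
      have := apply_end (c n) (m n) hn hn (hsteps n) (by rw [hdcn]; exact hlen n)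
      rw [hdcn, hcm n] at this
      calc dist (gn n d) y ≤ 1 / ((n : ℝ) + 1) + 1 / ((n : ℝ) + 1) := this
        _ = 2 * (1 / ((n : ℝ) + 1)) := by ring
    have hA : Tendsto (fun n => dist (gn n d) y) atTop (nhds 0) :=
      squeeze_zero (fun n => dist_nonneg) hclose hrate
    have hB : Tendsto (fun n => dist (gn n d) y) (U : Filter ℕ)
        (nhds (dist (g d) y)) := (hg d).dist tendsto_const_nhds
    have : dist (g d) y = 0 := tendsto_nhds_unique hB (hA.mono_left hU)
    exact eq_of_dist_eq_zero this
  refine ⟨g, hx, hy, ?_⟩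
  intro s hs t ht
  rcases le_total s t with h | h
  · rw [hiso s hs t ht h, abs_sub_comm, abs_of_nonneg (by linarith)]
  · rw [dist_comm, hiso t ht s hs h, abs_of_nonneg (by linarith)]
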